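/- In the reduction from Set Cover to DkℓSP, the Set Cover instance (N with n elements, family F of w subsets, budget γ) has a cover of size γ if and only if the constructed routing instance admits a secure set S of size k = n + γ + 1 making at least ℓ = n + w + 1 ASes happy. -/
import Mathlib


open scoped Classical

namespace SBGP

/-- Business relationship of a neighbor, from the point of view of a given AS. -/
inductive Rel
  | customer
  | peer
  | provider
deriving DecidableEq

/-- The three positions at which the secure-route preference step can be inserted. -/
inductive SecModel
  | first
  | second
  | third
deriving DecidableEq

/-- An AS-level graph with business relationships on its edges. -/
structure ASGraph (V : Type*) where
  adj : V → V → Bool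
  /-- `rel u v` is the relationship of `v` as seen from `u`
      (`customer` means `v` is `u`'s customer, etc.). -/
  rel : V → V → Rel
  adj_symm : ∀ u v, adj u v = adj v u
  adj_irrefl : ∀ v, adj v v = false
  rel_consistent : ∀ u v, adj u v = true →
    ((rel u v = Rel.customer ↔ rel v u = Rel.provider) ∧
     (rel u v = Rel.peer ↔ rel v u = Rel.peer))

variable {V : Type*}

def lpRank : Rel → ℕ
  | Rel.customer => 0
  | Rel.peer => 1
  | Rel.provider => 2

/-- The relationship of the next hop of a route (`none` for trivial routes). -/
def nextRel (G : ASGraph V) : List V → Option Rel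
  | a :: b :: _ => some (G.rel a b)
  | _ => none

/-- Local-preference value of a route (customer < peer < provider). -/
def lpVal (G : ASGraph V) : List V → ℕ
  | a :: b :: _ => lpRank (G.rel a b)
  | _ => 0

/-- `R` is a (nonempty) path in `G`. -/
def IsPath (G : ASGraph V) : List V → Prop
  | [] => False
  | [_] => True
  | a :: b :: rest => G.adj a b = true ∧ IsPath G (b :: rest)

/-- `R` is a simple route in `G` ending at `d`. -/
def IsRouteTo (G : ASGraph V) (R : List V) (d : V) : Prop :=
  R.Nodup ∧ IsPath G R ∧ R.getLast? = some d

/-- The export rule (Ex) along a route `a :: b :: c :: …`: each internal AS `b`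
announces its route (with next hop `c`) to `a` only if that route is a customer
route of `b`, or `a` is `b`'s customer. -/
def ExportOK (G : ASGraph V) : List V → Prop
  | a :: b :: c :: rest =>
      (G.rel b c = Rel.customer ∨ G.rel b a = Rel.customer) ∧
      ExportOK G (b :: c :: rest)
  | _ => True

/-- A route is secure iff every AS on it has deployed S*BGP and it does not
contain the attacker (the bogus route is insecure even if the attacker is in `S`). -/
def SecureRoute (S : Finset V) (m : Option V) (R : List V) : Prop :=
  (∀ v ∈ R, v ∈ S) ∧ (∀ m', m = some m' → m' ∉ R)

/-- A legitimate route: ends at the destination `d` and avoids the attacker. -/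
def LegitRoute (m : Option V) (d : V) (R : List V) : Prop :=
  R.getLast? = some d ∧ ∀ m', m = some m' → m' ∉ R

/-- Perceivable routes at `s` for destination `d` when the (optional) attacker `m`
announces the bogus path "m,d": either a genuine export-compliant route to `d`
avoiding `m`, or an export-compliant route to `m` extended by `m`'s claimed
(possibly nonexistent) edge to `d`. -/
def Perceivable (G : ASGraph V) (m : Option V) (d : V) (s : V) (R : List V) : Prop :=
  R.head? = some s ∧
  ((IsRouteTo G R d ∧ ExportOK G R ∧ ∀ m', m = some m' → m' ∉ R) ∨
   (∃ m' R', m = some m' ∧ R = R' ++ [d] ∧ IsRouteTo G R' m' ∧ d ∉ R' ∧ ExportOK G R'))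

/-- The rank of a route (smaller is better), encoding lexicographically the
ranking steps of the given security model: LP (customer > peer > provider),
SP (shorter > longer) and SecP (secure > insecure), in the order determined by
the model.  All components are `< Fintype.card V + 2`, so the encoding is
faithful on simple routes. -/
noncomputable def rankNat [Fintype V] (G : ASGraph V) (S : Finset V) (m : Option V)
    (mdl : SecModel) (R : List V) : ℕ :=
  let B := Fintype.card V + 2
  let lp := lpVal G R
  let len := R.length
  let sec : ℕ := if SecureRoute S m R then 0 else 1
  match mdl with
  | SecModel.first => sec * B * B + lp * B + len
  | SecModel.second => lp * B * B + sec * B + len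
  | SecModel.third => lp * B * B + len * B + sec

/-- `n` exports the route `R` (its currently selected route) to neighbor `s`:
always if `R` is a customer route of `n` or `n` originates `R`; otherwise only
if `s` is `n`'s customer. -/
def exportsTo (G : ASGraph V) (n s : V) : List V → Prop
  | _ :: c :: _ => G.rel n c = Rel.customer ∨ G.rel n s = Rel.customer
  | _ => True

/-- Routes available to `s` given the current selections `σ` of all ASes:
routes exported by neighbors (with BGP loop detection), together with the
attacker's bogus announcement "m,d" to each of its neighbors. -/
def Avail (G : ASGraph V) (m : Option V) (d : V) (σ : V → List V) (s : V)
    (R : List V) : Prop :=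
  (∃ n, G.adj s n = true ∧ (∀ m', m = some m' → n ≠ m') ∧ σ n ≠ [] ∧
      (σ n).head? = some n ∧ s ∉ σ n ∧ exportsTo G n s (σ n) ∧ R = s :: σ n) ∨
  (∃ m', m = some m' ∧ G.adj s m' = true ∧ s ≠ d ∧ R = [s, m', d])

/-- A stable routing state for destination `d`, secure deployment `S`,
attacker `m`, security model `mdl` and tiebreak `tb`: every AS (other than the
destination and the attacker) selects the best available route, where ties in
rank are broken by the strict tiebreak `tb`. -/
def Stable [Fintype V] (G : ASGraph V) (tb : V → List V → ℕ) (S : Finset V)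
    (m : Option V) (d : V) (mdl : SecModel) (σ : V → List V) : Prop :=
  σ d = [d] ∧
  (∀ m', m = some m' → σ m' = []) ∧
  ∀ s, s ≠ d → (∀ m', m = some m' → s ≠ m') →
    ((σ s = [] ∧ ∀ R, ¬ Avail G m d σ s R) ∨
     (Avail G m d σ s (σ s) ∧
      ∀ R, Avail G m d σ s R → R ≠ σ s →
        rankNat G S m mdl (σ s) < rankNat G S m mdl R ∨
        (rankNat G S m mdl (σ s) = rankNat G S m mdl R ∧ tb s (σ s) < tb s R)))

/-- `s` is happy: it selects a legitimate route to `d`, avoiding the attacker. -/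
def Happy (m : Option V) (d : V) (σ : V → List V) (s : V) : Prop :=
  σ s ≠ [] ∧ (σ s).getLast? = some d ∧ ∀ m', m = some m' → m' ∉ σ s

/-- The set of most-preferred perceivable routes of `s` (before the tiebreak step). -/
def BPR [Fintype V] (G : ASGraph V) (S : Finset V) (m : Option V) (d : V)
    (mdl : SecModel) (s : V) (R : List V) : Prop :=
  Perceivable G m d s R ∧
  ∀ R', Perceivable G m d s R' → rankNat G S m mdl R ≤ rankNat G S m mdl R'

/-- The number of happy source ASes (sources other than `m` and `d`). -/
noncomputable def happyCount [Fintype V] [DecidableEq V] (m d : V)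
    (σ : V → List V) : ℕ :=
  (Finset.univ.filter fun s => s ≠ m ∧ s ≠ d ∧ Happy (some m) d σ s).card

/-- The customer-provider hierarchy is acyclic. -/
def Hierarchy (G : ASGraph V) : Prop :=
  ∃ h : V → ℕ, ∀ u v, G.adj u v = true → G.rel u v = Rel.customer → h v < h u

/-- The tiebreak of every AS is deterministic (injective on routes). -/
def InjTB (tb : V → List V → ℕ) : Prop :=
  ∀ s, Function.Injective (tb s)

end SBGP
namespace SBGP

/-- Vertices of the reduction: element ASes, set ASes, the destination
(`Sum.inr (Sum.inr false)`) and the attacker (`Sum.inr (Sum.inr true)`). -/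
abbrev RedV (n w : ℕ) := Fin n ⊕ Fin w ⊕ Bool

def redDst (n w : ℕ) : RedV n w := Sum.inr (Sum.inr false)

def redAtt (n w : ℕ) : RedV n w := Sum.inr (Sum.inr true)

/-- The AS graph constructed from a Set Cover instance: the attacker `m` and
every set AS `s_j` are customers of the element ASes (`e_i`–`s_j` edge present
iff `e_i ∈ F j`), each set AS `s_j` is a provider of the destination `d`. -/
noncomputable def redGraph (n w : ℕ) (F : Fin w → Finset (Fin n)) :
    ASGraph (RedV n w) where
  adj x y :=
    match x, y with
    | Sum.inl i, Sum.inr (Sum.inl j) => decide (i ∈ F j)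
    | Sum.inr (Sum.inl j), Sum.inl i => decide (i ∈ F j)
    | Sum.inl _, Sum.inr (Sum.inr true) => true
    | Sum.inr (Sum.inr true), Sum.inl _ => true
    | Sum.inr (Sum.inl _), Sum.inr (Sum.inr false) => true
    | Sum.inr (Sum.inr false), Sum.inr (Sum.inl _) => true
    | _, _ => false
  rel x y :=
    match x, y with
    | Sum.inl _, _ => Rel.customer               -- each e_i sees m and the s_j as customers
    | Sum.inr (Sum.inl _), Sum.inl _ => Rel.provider   -- each s_j sees the e_i as providers
    | Sum.inr (Sum.inl _), _ => Rel.customer     -- each s_j sees d as a customer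
    | Sum.inr (Sum.inr false), _ => Rel.provider -- d sees the s_j as providers
    | Sum.inr (Sum.inr true), _ => Rel.provider  -- m sees the e_i as providers
  adj_symm := by
    rintro (i | j | b) (i' | j' | b') <;> first
      | rfl
      | (cases b <;> rfl)
      | (cases b' <;> rfl)
      | (cases b <;> cases b' <;> rfl)
  adj_irrefl := by
    rintro (i | j | b)
    · rfl
    · rfl
    · cases b <;> rfl
  rel_consistent := by
    rintro (i | j | (_ | _)) (i' | j' | (_ | _)) h <;> simp_all
  
/-- The tiebreak of the reduction: every element AS prefers the route through
the attacker over any route through a set AS. -/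
def redTb (n w : ℕ) : RedV n w → List (RedV n w) → ℕ := fun _ R =>
  match R with
  | _ :: Sum.inr (Sum.inr true) :: _ => 0
  | _ :: Sum.inr (Sum.inl j) :: _ => j.val + 1
  | _ :: Sum.inl i :: _ => n + w + 2 + i.val
  | _ => n + w + 1


section ReductionProof

variable {n w : ℕ}

lemma card_redV : Fintype.card (RedV n w) = n + w + 2 := by
  simp [RedV]; omega

lemma redV_card_univ : (Finset.univ : Finset (RedV n w)).card = n + w + 2 := by
  rw [Finset.card_univ, card_redV]

lemma mem_getLast?_mem {α : Type*} {l : List α} {x : α} (h : l.getLast? = some x) : x ∈ l := by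
  obtain ⟨h1, h2⟩ := List.mem_getLast?_eq_getLast (l := l) (x := x) (by simp [h])
  exact h2 ▸ List.getLast_mem h1

lemma backward_dir (n w γ : ℕ) (F : Fin w → Finset (Fin n)) (mdl : SecModel)
    (S : Finset (RedV n w)) (hScard : S.card = n + γ + 1)
    (σ : RedV n w → List (RedV n w))
    (hst : Stable (redGraph n w F) (redTb n w) S (some (redAtt n w)) (redDst n w) mdl σ)
    (hhappy : n + w + 1 ≤ (Finset.univ.filter fun s =>
          s ≠ redAtt n w ∧ Happy (some (redAtt n w)) (redDst n w) σ s).card) :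
    ∃ C : Finset (Fin w), C.card ≤ γ ∧ ∀ e : Fin n, ∃ j ∈ C, e ∈ F j := by
  classical
  by_cases hn : n = 0
  · subst hn
    exact ⟨∅, by simp, fun e => e.elim0⟩
  -- every AS other than the attacker is happy
  have hall : ∀ s : RedV n w, s ≠ redAtt n w →
      Happy (some (redAtt n w)) (redDst n w) σ s := by
    intro s hs
    have hsub : (Finset.univ.filter fun s =>
          s ≠ redAtt n w ∧ Happy (some (redAtt n w)) (redDst n w) σ s) ⊆
        (Finset.univ.filter fun s => s ≠ redAtt n w) := by
      intro x hx
      simp only [Finset.mem_filter] at hx ⊢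
      exact ⟨hx.1, hx.2.1⟩
    have hc2 : (Finset.univ.filter fun s : RedV n w => s ≠ redAtt n w).card = n + w + 1 := by
      rw [Finset.filter_ne', Finset.card_erase_of_mem (Finset.mem_univ _), redV_card_univ]
      omega
    have heq := Finset.eq_of_subset_of_card_le hsub (by omega)
    have : s ∈ (Finset.univ.filter fun s : RedV n w => s ≠ redAtt n w) := by
      simp [hs]
    rw [← heq] at this
    exact (Finset.mem_filter.1 this).2.2
  obtain ⟨hσd, hσm, hrest⟩ := hst
  -- key fact about each element AS
  have key : ∀ i : Fin n, ∃ j : Fin w, i ∈ F j ∧ (Sum.inr (Sum.inl j) : RedV n w) ∈ S ∧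
      (Sum.inl i : RedV n w) ∈ S ∧ redDst n w ∈ S := by
    intro i
    obtain ⟨hne0, hlast, hnm⟩ := hall (Sum.inl i) (by simp [redAtt])
    have h3 := hrest (Sum.inl i) (by simp [redDst]) (by
      intro m' hm'
      cases hm'
      simp [redAtt])
    rcases h3 with ⟨h4, -⟩ | ⟨havail, hbest⟩
    · exact absurd h4 hne0
    rcases havail with ⟨nb, hadj, hnmb, hnbne, hhead, hnotin, hexp, hReq⟩ |
      ⟨m', hm', -, -, hReq⟩
    · rcases nb with i' | j | b
      · simp [redGraph] at hadj
      case inr.inr =>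
        cases b
        · simp [redGraph] at hadj
        · exact absurd rfl (hnmb _ rfl)
      -- main case : next hop is a set AS
      have hij : i ∈ F j := by simpa [redGraph] using hadj
      obtain ⟨t, hσj⟩ : ∃ t, σ (Sum.inr (Sum.inl j)) = Sum.inr (Sum.inl j) :: t := by
        cases hc : σ (Sum.inr (Sum.inl j)) with
        | nil => exact absurd hc hnbne
        | cons a t =>
          rw [hc] at hhead
          simp at hhead
          exact ⟨t, by rw [hhead]⟩
      have hR0 : σ (Sum.inl i) = Sum.inl i :: Sum.inr (Sum.inl j) :: t := by
        rw [hReq, hσj]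
      -- t is nonempty
      have ht : t ≠ [] := by
        intro hteq
        rw [hR0, hteq] at hlast
        simp [redDst] at hlast
      -- the bogus route is available
      have hAvB : Avail (redGraph n w F) (some (redAtt n w)) (redDst n w) σ (Sum.inl i)
          [Sum.inl i, redAtt n w, redDst n w] := by
        right
        exact ⟨redAtt n w, rfl, by simp [redGraph, redAtt], by simp [redDst], rfl⟩
      have hneB : [Sum.inl i, redAtt n w, redDst n w] ≠ σ (Sum.inl i) := by
        intro hEq
        exact hnm (redAtt n w) rfl (hEq ▸ (by simp))
      rcases hbest _ hAvB hneB with hstrict | ⟨-, htb⟩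
      · -- the selected route must be secure
        have hsecB : ¬ SecureRoute S (some (redAtt n w)) [Sum.inl i, redAtt n w, redDst n w] := by
          rintro ⟨-, h2⟩
          exact h2 (redAtt n w) rfl (by simp)
        have hsec : SecureRoute S (some (redAtt n w)) (σ (Sum.inl i)) := by
          by_contra hsec
          rw [hR0] at hstrict
          rw [hR0] at hsec
          have hB : 2 ≤ Fintype.card (RedV n w) + 2 := by omega
          have ht1 : 1 ≤ t.length := by
            cases t
            · exact absurd rfl ht
            · simp
          rcases mdl <;>
            simp only [rankNat, lpVal, redGraph, lpRank, if_neg hsec, if_neg hsecB,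
              List.length_cons, List.length_nil] at hstrict <;>
            nlinarith [hstrict, ht1, hB]
        obtain ⟨hmem, -⟩ := hsec
        refine ⟨j, hij, hmem _ (by rw [hR0]; simp), hmem _ (by rw [hR0]; simp), ?_⟩
        exact hmem _ (mem_getLast?_mem hlast)
      · -- tiebreak case is impossible: the bogus route has tiebreak value 0
        rw [hR0] at htb
        simp [redTb, redAtt] at htb
    · -- the selected route goes through the attacker: contradiction with happiness
      have : redAtt n w ∈ σ (Sum.inl i) := by
        cases Option.some.inj hm'
        rw [hReq]; simp
      exact absurd this (hnm _ rfl)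
  -- build the cover
  set C : Finset (Fin w) := Finset.univ.filter
    (fun j => (Sum.inr (Sum.inl j) : RedV n w) ∈ S) with hCdef
  have hcov : ∀ e : Fin n, ∃ j ∈ C, e ∈ F j := by
    intro e
    obtain ⟨j, h1, h2, -, -⟩ := key e
    exact ⟨j, by simp [hCdef, h2], h1⟩
  -- card bound
  have i0 : Fin n := ⟨0, Nat.pos_of_ne_zero hn⟩
  obtain ⟨-, -, -, -, hdS⟩ := key i0
  have hsubS : (Finset.univ.image (Sum.inl : Fin n → RedV n w) ∪
      C.image (fun j => (Sum.inr (Sum.inl j) : RedV n w)) ∪ {redDst n w}) ⊆ S := by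
    intro x hx
    simp only [Finset.mem_union, Finset.mem_image, Finset.mem_singleton,
      Finset.mem_univ, true_and] at hx
    rcases hx with (⟨i, rfl⟩ | ⟨j, hj, rfl⟩) | rfl
    · exact (key i).choose_spec.2.2.1
    · exact (Finset.mem_filter.1 hj).2
    · exact hdS
  have hTcard : (Finset.univ.image (Sum.inl : Fin n → RedV n w) ∪
      C.image (fun j => (Sum.inr (Sum.inl j) : RedV n w)) ∪ {redDst n w}).card
      = n + C.card + 1 := by
    rw [Finset.card_union_of_disjoint (by
        simp [Finset.disjoint_left, redDst]),
      Finset.card_union_of_disjoint (by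
        simp [Finset.disjoint_left]),
      Finset.card_image_of_injective _ (fun a b h => Sum.inl.inj h),
      Finset.card_image_of_injective _ (fun a b h => Sum.inl.inj (Sum.inr.inj h))]
    simp
  have := Finset.card_le_card hsubS
  rw [hTcard, hScard] at this
  exact ⟨C, by omega, hcov⟩


lemma forward_dir (n w γ : ℕ) (hγ : γ ≤ w) (F : Fin w → Finset (Fin n)) (mdl : SecModel)
    (C : Finset (Fin w)) (hC : C.card ≤ γ) (hcov : ∀ e : Fin n, ∃ j ∈ C, e ∈ F j) :
    ∃ S : Finset (RedV n w), S.card = n + γ + 1 ∧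
      ∃ σ : RedV n w → List (RedV n w),
        Stable (redGraph n w F) (redTb n w) S (some (redAtt n w)) (redDst n w) mdl σ ∧
        n + w + 1 ≤ (Finset.univ.filter fun s =>
          s ≠ redAtt n w ∧ Happy (some (redAtt n w)) (redDst n w) σ s).card := by
  classical
  obtain ⟨C', hCC', hC'⟩ := Finset.exists_superset_card_eq hC (by simpa using hγ)
  set S : Finset (RedV n w) := Finset.univ.image (Sum.inl : Fin n → RedV n w) ∪
      C'.image (fun j => (Sum.inr (Sum.inl j) : RedV n w)) ∪ {Sum.inr (Sum.inr false)} with hS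
  have hSe : ∀ i : Fin n, (Sum.inl i : RedV n w) ∈ S := by intro i; simp [hS]
  have hSs : ∀ j : Fin w, ((Sum.inr (Sum.inl j) : RedV n w) ∈ S) ↔ j ∈ C' := by
    intro j; simp [hS]
  have hSd : (Sum.inr (Sum.inr false) : RedV n w) ∈ S := by simp [hS]
  have hScard : S.card = n + γ + 1 := by
    rw [hS, Finset.card_union_of_disjoint (by simp [Finset.disjoint_left]),
      Finset.card_union_of_disjoint (by simp [Finset.disjoint_left]),
      Finset.card_image_of_injective _ (fun a b h => Sum.inl.inj h),
      Finset.card_image_of_injective _ (fun a b h => Sum.inl.inj (Sum.inr.inj h))]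
    simp [hC']
  -- choice of the covering set for each element
  have hne : ∀ i : Fin n, (Finset.univ.filter fun j => j ∈ C' ∧ i ∈ F j).Nonempty := by
    intro i; obtain ⟨j, hjC, hjF⟩ := hcov i
    exact ⟨j, by simp [hCC' hjC, hjF]⟩
  set j0 : Fin n → Fin w := fun i => (Finset.univ.filter fun j => j ∈ C' ∧ i ∈ F j).min' (hne i)
    with hj0
  have hj0C : ∀ i, j0 i ∈ C' := fun i => ((Finset.mem_filter.1 (Finset.min'_mem _ (hne i))).2).1
  have hj0F : ∀ i, i ∈ F (j0 i) := fun i => ((Finset.mem_filter.1 (Finset.min'_mem _ (hne i))).2).2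
  have hj0min : ∀ i j, j ∈ C' → i ∈ F j → j0 i ≤ j := fun i j h1 h2 =>
    Finset.min'_le _ _ (by simp [h1, h2])
  -- the stable routing state
  set σ : RedV n w → List (RedV n w) := fun v =>
    match v with
    | Sum.inl i => [Sum.inl i, Sum.inr (Sum.inl (j0 i)), Sum.inr (Sum.inr false)]
    | Sum.inr (Sum.inl j) => [Sum.inr (Sum.inl j), Sum.inr (Sum.inr false)]
    | Sum.inr (Sum.inr false) => [Sum.inr (Sum.inr false)]
    | Sum.inr (Sum.inr true) => [] with hσ
  have hσe : ∀ i : Fin n, σ (Sum.inl i) =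
      [Sum.inl i, Sum.inr (Sum.inl (j0 i)), Sum.inr (Sum.inr false)] := fun i => by rw [hσ]
  have hσs : ∀ j : Fin w, σ (Sum.inr (Sum.inl j)) =
      [Sum.inr (Sum.inl j), Sum.inr (Sum.inr false)] := fun j => by rw [hσ]
  have hσd : σ (Sum.inr (Sum.inr false)) = [Sum.inr (Sum.inr false)] := by rw [hσ]
  have hσm : σ (Sum.inr (Sum.inr true)) = [] := by rw [hσ]
  -- security of the relevant routes
  have secA : ∀ j : Fin w, SecureRoute S (some (Sum.inr (Sum.inr true) : RedV n w))
      [Sum.inr (Sum.inl j), Sum.inr (Sum.inr false)] ↔ j ∈ C' := by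
    intro j; simp [SecureRoute, hSs, hSd, redAtt]
  have secE : ∀ (i : Fin n) (j : Fin w), SecureRoute S (some (Sum.inr (Sum.inr true) : RedV n w))
      [Sum.inl i, Sum.inr (Sum.inl j), Sum.inr (Sum.inr false)] ↔ j ∈ C' := by
    intro i j; simp [SecureRoute, hSs, hSd, hSe, redAtt]
  have secQ : ∀ (j : Fin w) (i : Fin n) (j' : Fin w), SecureRoute S (some (Sum.inr (Sum.inr true) : RedV n w))
      [Sum.inr (Sum.inl j), Sum.inl i, Sum.inr (Sum.inl j'), Sum.inr (Sum.inr false)] ↔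
      (j ∈ C' ∧ j' ∈ C') := by
    intro j i j'; simp [SecureRoute, hSs, hSd, hSe, redAtt]
  have secBog : ∀ i : Fin n, ¬ SecureRoute S (some (Sum.inr (Sum.inr true) : RedV n w))
      [Sum.inl i, Sum.inr (Sum.inr true), Sum.inr (Sum.inr false)] := by
    rintro i ⟨-, h2⟩
    exact h2 _ rfl (by simp)
  have hB1 : 1 ≤ Fintype.card (RedV n w) := by rw [card_redV]; omega
  refine ⟨S, hScard, σ, ⟨hσd, fun m' hm' => by cases hm'; exact hσm, ?_⟩, ?_⟩
  · -- stability of every source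
    rintro (i | j | b) hdne hmne
    · -- element AS i
      right
      constructor
      · left
        refine ⟨Sum.inr (Sum.inl (j0 i)), ?_, ?_, ?_, ?_, ?_, ?_, ?_⟩
        · simp [redGraph, hj0F i]
        · rintro m' hm'; cases hm'; simp [redAtt]
        · rw [hσs]; simp
        · rw [hσs]; rfl
        · rw [hσs]; simp
        · rw [hσs]; exact Or.inl rfl
        · rw [hσe, hσs]
      · rintro R (⟨nb, hadj, hnmb, hnbne, hhead, hnotin, hexp, hReq⟩ |
          ⟨m', hm', hadjm, -, hReq⟩) hRne
        · rcases nb with i' | j | b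
          · simp [redGraph] at hadj
          · -- via a set AS j
            have hij : i ∈ F j := by simpa [redGraph] using hadj
            rw [hσs] at hReq
            subst hReq
            by_cases hjj : j = j0 i
            · subst hjj
              exact absurd (hσe i).symm hRne
            · by_cases hjC : j ∈ C'
              · right
                constructor
                · rw [hσe]
                  rcases mdl <;>
                    simp [rankNat, lpVal, redGraph, lpRank, secE, hjC, hj0C i, redAtt]
                · rw [hσe]
                  simp only [redTb]
                  have hlt : j0 i < j := lt_of_le_of_ne (hj0min i j hjC hij)
                    (fun hh => hjj hh.symm)
                  exact Nat.succ_lt_succ hlt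
              · left
                rw [hσe]
                rcases mdl <;>
                  simp [rankNat, lpVal, redGraph, lpRank, secE, hjC, hj0C i, redAtt] <;>
                  nlinarith [hB1]
          · cases b
            · simp [redGraph] at hadj
            · exact absurd rfl (hnmb _ rfl)
        · -- bogus route
          cases Option.some.inj hm'
          rw [show redAtt n w = Sum.inr (Sum.inr true) from rfl,
            show redDst n w = Sum.inr (Sum.inr false) from rfl] at hReq
          subst hReq
          left
          rw [hσe]
          rcases mdl <;>
            simp [rankNat, lpVal, redGraph, lpRank, secE, hj0C i, secBog i, redAtt] <;>
            nlinarith [hB1]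
    · -- set AS j
      right
      constructor
      · left
        refine ⟨Sum.inr (Sum.inr false), ?_, ?_, ?_, ?_, ?_, ?_, ?_⟩
        · simp [redGraph]
        · rintro m' hm'; cases hm'; simp [redAtt]
        · rw [hσd]; simp
        · rw [hσd]; rfl
        · rw [hσd]; simp
        · rw [hσd]; trivial
        · rw [hσs, hσd]
      · rintro R (⟨nb, hadj, hnmb, hnbne, hhead, hnotin, hexp, hReq⟩ |
          ⟨m', hm', hadjm, -, hReq⟩) hRne
        · rcases nb with i | j' | b
          · -- via an element AS
            have hij : i ∈ F j := by simpa [redGraph] using hadj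
            rw [hσe] at hReq
            subst hReq
            left
            rw [hσs]
            by_cases hjC : j ∈ C' <;>
              rcases mdl <;>
                simp [rankNat, lpVal, redGraph, lpRank, secA, secQ, hjC, hj0C i, redAtt] <;>
                nlinarith [hB1]
          · simp [redGraph] at hadj
          · cases b
            · rw [hσd] at hReq
              rw [hReq] at hRne
              exact absurd (hσs j).symm hRne
            · exact absurd rfl (hnmb _ rfl)
        · cases Option.some.inj hm'
          simp [redGraph, redAtt] at hadjm
    · -- destination and attacker are excluded
      cases b
      · exact absurd rfl hdne
      · exact absurd rfl (hmne _ rfl)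
  · -- at least n + w + 1 happy ASes
    have hhap : ∀ s : RedV n w, s ≠ redAtt n w →
        Happy (some (redAtt n w)) (redDst n w) σ s := by
      rintro (i | j | b) hs
      · refine ⟨by rw [hσe]; simp, by rw [hσe]; rfl, ?_⟩
        rintro m' hm'; cases hm'; rw [hσe]; simp [redAtt]
      · refine ⟨by rw [hσs]; simp, by rw [hσs]; rfl, ?_⟩
        rintro m' hm'; cases hm'; rw [hσs]; simp [redAtt]
      · cases b
        · refine ⟨by rw [hσd]; simp, by rw [hσd]; rfl, ?_⟩
          rintro m' hm'; cases hm'; rw [hσd]; simp [redAtt]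
        · exact absurd rfl hs
    have heq : (Finset.univ.filter fun s =>
          s ≠ redAtt n w ∧ Happy (some (redAtt n w)) (redDst n w) σ s) =
        (Finset.univ.filter fun s : RedV n w => s ≠ redAtt n w) := by
      refine Finset.filter_congr fun x _ => ?_
      exact ⟨fun h => h.1, fun h => ⟨h, hhap x h⟩⟩
    rw [heq, Finset.filter_ne', Finset.card_erase_of_mem (Finset.mem_univ _), redV_card_univ]
    omega

end ReductionProof

/-- **Correctness of the reduction from Set Cover to DkℓSP.**  The Set Cover
instance (`n` elements, family `F` of `w` subsets, budget `γ ≤ w`) has a cover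
of size `γ` if and only if, in each of the three security models, the
constructed routing instance admits a secure deployment `S` of size
`k = n + γ + 1` making at least `ℓ = n + w + 1` ASes happy. -/
theorem setCover_reduction_correct (n w γ : ℕ) (hγ : γ ≤ w)
    (F : Fin w → Finset (Fin n)) (mdl : SecModel) :
    (∃ C : Finset (Fin w), C.card ≤ γ ∧ ∀ e : Fin n, ∃ j ∈ C, e ∈ F j) ↔
    (∃ S : Finset (RedV n w), S.card = n + γ + 1 ∧
      ∃ σ : RedV n w → List (RedV n w),
        Stable (redGraph n w F) (redTb n w) S (some (redAtt n w)) (redDst n w) mdl σ ∧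
        n + w + 1 ≤ (Finset.univ.filter fun s =>
          s ≠ redAtt n w ∧ Happy (some (redAtt n w)) (redDst n w) σ s).card) := by
  constructor
  · rintro ⟨C, h1, h2⟩
    exact forward_dir n w γ hγ F mdl C h1 h2
  · rintro ⟨S, h1, σ, h2, h3⟩
    exact backward_dir n w γ F mdl S h1 σ h2 h3

end SBGP
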